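/- Let H, U be separable Hilbert spaces, f : P_2(H) → U with Λ-continuously Fréchet differentiable lift f̂ on L^2(Ω,H), and X_0 ∈ L^2(Ω,H) taking values x_1,…,x_N with probabilities p_k > 0, μ_0 = law(X_0). Let m_{μ_0}(B) := Df̂(X_0)(1_{X_0 ∈ B} ·) for B ∈ B(H). Then the L(H,U)-valued step map g(x) := Σ_{k=1}^N (m_{μ_0}({x_k})/μ_0({x_k})) 1_{{x_k}}(x) satisfies E[1_A · g(X_0)] = m_{Df̂(X_0)}(A) for all A ∈ F, i.e. g is a μ_0-version of the Radon–Nikodym derivative dm_{μ_0}/dμ_0. -/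

import Mathlib

open MeasureTheory ENNReal Filter

noncomputable section

/-- The `2`-semivariation norm (with general exponent `p`) of an operator on `L^p`. -/
def opSemiVar {Ω E F : Type*} [MeasurableSpace Ω] (P : Measure Ω) [IsFiniteMeasure P]
    [NormedAddCommGroup E] [NormedSpace ℝ E] [NormedAddCommGroup F] [NormedSpace ℝ F]
    (p : ℝ≥0∞) [Fact (1 ≤ p)] (L : Lp E p P →L[ℝ] F) : ℝ≥0∞ :=
  ⨆ (n : ℕ) (As : Fin n → Set Ω) (xs : Fin n → E) (hAs : ∀ i, MeasurableSet (As i))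
    (_ : Pairwise (Function.onFun Disjoint As))
    (_ : eLpNorm (fun ω => ∑ i, (As i).indicator (fun _ => xs i) ω) p P ≤ 1),
    ∑ i, (‖L (indicatorConstLp p (hAs i) (measure_ne_top P (As i)) (xs i))‖₊ : ℝ≥0∞)

section Aux

variable {Ω : Type*} [MeasurableSpace Ω] (P : Measure Ω) [IsFiniteMeasure P]

/-- From the splitting hypothesis, positive-measure sets contain subsets of
arbitrarily small positive measure. -/
lemma my_small
    (hat : ∀ A : Set Ω, MeasurableSet A → 0 < P A →
      ∃ B : Set Ω, MeasurableSet B ∧ B ⊆ A ∧ 0 < P B ∧ P B < P A)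
    {A : Set Ω} (hA : MeasurableSet A) (h0 : 0 < P A) {d : ℝ≥0∞} (hd : 0 < d) :
    ∃ B : Set Ω, MeasurableSet B ∧ B ⊆ A ∧ 0 < P B ∧ P B < d := by
  -- halving step
  have half : ∀ C : Set Ω, MeasurableSet C → 0 < P C →
      ∃ B : Set Ω, MeasurableSet B ∧ B ⊆ C ∧ 0 < P B ∧ P B ≤ P C / 2 := by
    intro C hC h0C
    obtain ⟨B, hB, hBC, hB0, hBlt⟩ := hat C hC h0C
    rcases le_or_gt (P B) (P C / 2) with h | h
    · exact ⟨B, hB, hBC, hB0, h⟩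
    · refine ⟨C \ B, hC.diff hB, Set.diff_subset, ?_, ?_⟩
      · rw [measure_diff hBC hB.nullMeasurableSet (measure_ne_top P B)]
        exact tsub_pos_iff_lt.2 hBlt
      · rw [measure_diff hBC hB.nullMeasurableSet (measure_ne_top P B)]
        calc P C - P B ≤ P C - P C / 2 := tsub_le_tsub_left h.le _
        _ = P C / 2 := ENNReal.sub_half (measure_ne_top P C)
  have iter : ∀ n : ℕ, ∃ B : Set Ω, MeasurableSet B ∧ B ⊆ A ∧ 0 < P B ∧ P B ≤ P A * 2⁻¹ ^ n := by
    intro n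
    induction n with
    | zero => exact ⟨A, hA, subset_rfl, h0, by simp⟩
    | succ n ih =>
      obtain ⟨B, hB, hBA, hB0, hBle⟩ := ih
      obtain ⟨B', hB', hB'B, hB'0, hB'le⟩ := half B hB hB0
      refine ⟨B', hB', hB'B.trans hBA, hB'0, ?_⟩
      calc P B' ≤ P B / 2 := hB'le
      _ ≤ P A * 2⁻¹ ^ n / 2 := ENNReal.div_le_div_right hBle 2
      _ = P A * 2⁻¹ ^ (n + 1) := by rw [pow_succ, div_eq_mul_inv, mul_assoc]
  obtain ⟨n, hn⟩ := ENNReal.exists_inv_two_pow_lt (ne_of_gt (ENNReal.div_pos hd.ne' (measure_ne_top P A)))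
  obtain ⟨B, hB, hBA, hB0, hBle⟩ := iter n
  refine ⟨B, hB, hBA, hB0, ?_⟩
  calc P B ≤ P A * 2⁻¹ ^ n := hBle
  _ < P A * (d / P A) := by rw [mul_comm (P A), mul_comm (P A)]; exact ENNReal.mul_lt_mul_left h0.ne' (measure_ne_top P A) hn
  _ ≤ d := ENNReal.mul_div_le

/-- Sierpiński: an atomless finite measure attains every intermediate value on subsets. -/
lemma my_sierpinski
    (hat : ∀ A : Set Ω, MeasurableSet A → 0 < P A →
      ∃ B : Set Ω, MeasurableSet B ∧ B ⊆ A ∧ 0 < P B ∧ P B < P A)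
    {A : Set Ω} (hA : MeasurableSet A) {r : ℝ≥0∞} (hr : r ≤ P A) :
    ∃ B : Set Ω, MeasurableSet B ∧ B ⊆ A ∧ P B = r := by
  classical
  have hrtop : r ≠ ∞ := (hr.trans_lt (measure_lt_top P A)).ne
  -- greedy step
  have step : ∀ S : Set Ω, MeasurableSet S → S ⊆ A → P S ≤ r →
      ∃ S' : Set Ω, MeasurableSet S' ∧ S ⊆ S' ∧ S' ⊆ A ∧ P S' ≤ r ∧
        ∀ B : Set Ω, MeasurableSet B → B ⊆ A \ S → P S + P B ≤ r →
          P S + P B / 2 ≤ P S' := by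
    intro S hS hSA hSr
    set G : Set (Set Ω) := {B | MeasurableSet B ∧ B ⊆ A \ S ∧ P S + P B ≤ r} with hG
    set ε : ℝ≥0∞ := ⨆ B ∈ G, P B with hε
    by_cases hε0 : ε = 0
    · refine ⟨S, hS, subset_rfl, hSA, hSr, fun B hB hBA hBr => ?_⟩
      have : P B ≤ ε := le_biSup _ (⟨hB, hBA, hBr⟩ : B ∈ G)
      rw [hε0] at this
      simp [le_antisymm this zero_le]
    · have hεr : ε ≤ r := by
        refine iSup₂_le fun B hB => ?_
        exact le_trans (le_add_self) hB.2.2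
      have hεtop : ε ≠ ∞ := (hεr.trans_lt hrtop.lt_top).ne
      have hhalf : ε / 2 < ε := ENNReal.half_lt_self hε0 hεtop
      obtain ⟨B₀, hB₀G, hB₀⟩ : ∃ B₀ ∈ G, ε / 2 < P B₀ := by
        by_contra h
        push_neg at h
        exact absurd (iSup₂_le h) (not_le.2 hhalf)
      obtain ⟨hB₀m, hB₀A, hB₀r⟩ := hB₀G
      have hdisj : Disjoint S B₀ := by
        refine Set.disjoint_left.2 fun ω hωS hωB => (hB₀A hωB).2 hωS
      refine ⟨S ∪ B₀, hS.union hB₀m, Set.subset_union_left,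
        Set.union_subset hSA (hB₀A.trans Set.diff_subset), ?_, ?_⟩
      · rw [measure_union hdisj hB₀m]; exact hB₀r
      · intro B hB hBA hBr
        rw [measure_union hdisj hB₀m]
        have h1 : P B ≤ ε := le_biSup _ (⟨hB, hBA, hBr⟩ : B ∈ G)
        have : P B / 2 ≤ ε / 2 := ENNReal.div_le_div_right h1 2
        exact add_le_add_right (this.trans hB₀.le) _
  -- the recursively defined increasing sequence
  let Q : Set Ω → Prop := fun S => MeasurableSet S ∧ S ⊆ A ∧ P S ≤ r
  let T : {S : Set Ω // Q S} → {S : Set Ω // Q S} := fun S =>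
    ⟨Classical.choose (step S.1 S.2.1 S.2.2.1 S.2.2.2),
     (Classical.choose_spec (step S.1 S.2.1 S.2.2.1 S.2.2.2)).1,
     (Classical.choose_spec (step S.1 S.2.1 S.2.2.1 S.2.2.2)).2.2.1,
     (Classical.choose_spec (step S.1 S.2.1 S.2.2.1 S.2.2.2)).2.2.2.1⟩
  let seq : ℕ → {S : Set Ω // Q S} := fun n => T^[n] ⟨∅, MeasurableSet.empty, Set.empty_subset A, by simp⟩
  have hseq_succ : ∀ n, seq (n + 1) = T (seq n) := fun n => Function.iterate_succ_apply' T n _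
  have hmono : ∀ n, (seq n).1 ⊆ (seq (n+1)).1 := by
    intro n
    rw [hseq_succ]
    exact (Classical.choose_spec (step (seq n).1 (seq n).2.1 (seq n).2.2.1 (seq n).2.2.2)).2.1
  have hgreedy : ∀ n, ∀ B : Set Ω, MeasurableSet B → B ⊆ A \ (seq n).1 →
      P (seq n).1 + P B ≤ r → P (seq n).1 + P B / 2 ≤ P (seq (n+1)).1 := by
    intro n
    rw [hseq_succ]
    exact (Classical.choose_spec (step (seq n).1 (seq n).2.1 (seq n).2.2.1 (seq n).2.2.2)).2.2.2.2
  have hmono' : Monotone fun n => (seq n).1 := monotone_nat_of_le_succ hmono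
  set S := ⋃ n, (seq n).1 with hSdef
  have hSm : MeasurableSet S := MeasurableSet.iUnion fun n => (seq n).2.1
  have hSA : S ⊆ A := Set.iUnion_subset fun n => (seq n).2.2.1
  have hPS : P S = ⨆ n, P (seq n).1 := (Monotone.directed_le hmono').measure_iUnion
  have hSr : P S ≤ r := by
    rw [hPS]; exact iSup_le fun n => (seq n).2.2.2
  refine ⟨S, hSm, hSA, le_antisymm hSr ?_⟩
  by_contra hlt
  push_neg at hlt
  -- P S < r; find a small positive-measure set in A \ S
  have hAS : 0 < P (A \ S) := by
    rw [measure_diff hSA hSm.nullMeasurableSet (measure_ne_top P S)]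
    exact tsub_pos_iff_lt.2 (hlt.trans_le hr)
  have hd : (0:ℝ≥0∞) < r - P S := tsub_pos_iff_lt.2 hlt
  obtain ⟨B, hBm, hBAS, hB0, hBlt⟩ := my_small P hat (hA.diff hSm) hAS hd
  -- each step increases measure by at least P B / 2
  have key : ∀ n, P (seq n).1 + P B / 2 ≤ P (seq (n+1)).1 := by
    intro n
    refine hgreedy n B hBm (hBAS.trans (Set.diff_subset_diff_right (Set.subset_iUnion (fun k => (seq k).1) n))) ?_
    calc P (seq n).1 + P B ≤ P S + P B :=
          add_le_add_left (measure_mono (Set.subset_iUnion (fun k => (seq k).1) n)) _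
    _ ≤ P S + (r - P S) := add_le_add_right hBlt.le _
    _ = r := add_tsub_cancel_of_le (hSr)
  have grow : ∀ n : ℕ, (n : ℝ≥0∞) * (P B / 2) ≤ P (seq n).1 := by
    intro n
    induction n with
    | zero => simp
    | succ n ih =>
      calc ((n+1 : ℕ) : ℝ≥0∞) * (P B / 2) = (n : ℝ≥0∞) * (P B / 2) + P B / 2 := by
            push_cast; ring
      _ ≤ P (seq n).1 + P B / 2 := by gcongr
      _ ≤ P (seq (n+1)).1 := key n
  have hB20 : P B / 2 ≠ 0 := by
    simp only [ne_eq, ENNReal.div_eq_zero_iff]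
    push_neg
    exact ⟨hB0.ne', by norm_num⟩
  obtain ⟨n, hn⟩ := ENNReal.exists_nat_mul_gt hB20 hrtop
  exact absurd ((grow n).trans (seq n).2.2.2) (not_le.2 hn)

/-- If a finitely additive vector measure `m` with `‖m A‖ ≤ K √(P A)` depends only on
`P A` for subsets `A ⊆ Bk`, then it is proportional to `P` there. -/
lemma my_scale {U : Type*} [NormedAddCommGroup U] [NormedSpace ℝ U]
    (hat : ∀ A : Set Ω, MeasurableSet A → 0 < P A →
      ∃ B : Set Ω, MeasurableSet B ∧ B ⊆ A ∧ 0 < P B ∧ P B < P A)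
    (m : Set Ω → U) (K : ℝ)
    (hnorm : ∀ A : Set Ω, MeasurableSet A → ‖m A‖ ≤ K * Real.sqrt (P A).toReal)
    (hadd : ∀ A A' : Set Ω, MeasurableSet A → MeasurableSet A' → Disjoint A A' →
      m (A ∪ A') = m A + m A')
    {Bk : Set Ω} (hBk : MeasurableSet Bk) (hBkpos : 0 < P Bk)
    (hinvk : ∀ A A' : Set Ω, MeasurableSet A → MeasurableSet A' → A ⊆ Bk → A' ⊆ Bk →
      P A = P A' → m A = m A')
    {A : Set Ω} (hA : MeasurableSet A) (hABk : A ⊆ Bk) :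
    m A = ((P A).toReal / (P Bk).toReal) • m Bk := by
  have hzero : ∀ A : Set Ω, MeasurableSet A → P A = 0 → m A = 0 := by
    intro A hAm h0
    have := hnorm A hAm
    rw [h0] at this
    simp only [ENNReal.toReal_zero, Real.sqrt_zero, mul_zero] at this
    exact norm_le_zero_iff.1 this
  have hdiff : ∀ A A' : Set Ω, MeasurableSet A → MeasurableSet A' → A' ⊆ A →
      m A = m A' + m (A \ A') := by
    intro A A' hAm hA'm hsub
    have := hadd A' (A \ A') hA'm (hAm.diff hA'm) Set.disjoint_sdiff_right
    rwa [Set.union_diff_cancel hsub] at this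
  set p : ℝ≥0∞ := P Bk with hp
  have hptop : p ≠ ∞ := measure_ne_top P Bk
  -- natural-number scaling
  have C3 : ∀ n : ℕ, ∀ s : ℝ≥0∞, (n : ℝ≥0∞) * s ≤ p →
      ∀ A A' : Set Ω, MeasurableSet A → MeasurableSet A' → A ⊆ Bk → A' ⊆ Bk →
      P A = s → P A' = (n : ℝ≥0∞) * s → m A' = (n : ℝ) • m A := by
    intro n
    induction n with
    | zero =>
      intro s _ A A' _ hA'm _ _ _ hPA'
      simp only [Nat.cast_zero, zero_mul] at hPA' ⊢
      rw [hzero A' hA'm hPA', zero_smul]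
    | succ n ih =>
      intro s hle A A' hAm hA'm hABk hA'Bk hPA hPA'
      have hsfin : s ≠ ∞ := by
        rw [← hPA]; exact measure_ne_top P A
      have hns : (n : ℝ≥0∞) * s ≤ P A' := by
        rw [hPA']
        gcongr
        exact_mod_cast Nat.le_succ n
      obtain ⟨A'', hA''m, hA''sub, hPA''⟩ := my_sierpinski P hat hA'm hns
      have hsplit := hdiff A' A'' hA'm hA''m hA''sub
      have hPdiff : P (A' \ A'') = s := by
        rw [measure_diff hA''sub hA''m.nullMeasurableSet (measure_ne_top P A''), hPA'', hPA']
        push_cast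
        rw [add_one_mul]
        exact ENNReal.add_sub_cancel_left (by
          exact ENNReal.mul_ne_top (ENNReal.natCast_ne_top n) hsfin)
      have h1 : m A'' = (n : ℝ) • m A :=
        ih s (le_trans (by gcongr; exact_mod_cast Nat.le_succ n) hle) A A'' hAm hA''m hABk
          (hA''sub.trans hA'Bk) hPA hPA''
      have h2 : m (A' \ A'') = m A :=
        hinvk _ _ (hA'm.diff hA''m) hAm (Set.diff_subset.trans hA'Bk) hABk (by rw [hPdiff, hPA])
      rw [hsplit, h1, h2]
      push_cast
      rw [add_smul, one_smul]
  -- rational scaling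
  have C4 : ∀ n j : ℕ, 0 < n → j ≤ n → ∀ A : Set Ω, MeasurableSet A → A ⊆ Bk →
      P A = (j : ℝ≥0∞) * (p / n) → m A = ((j : ℝ) / (n : ℝ)) • m Bk := by
    intro n j hn hjn A hAm hABk hPA
    have hn0 : (n : ℝ≥0∞) ≠ 0 := by exact_mod_cast hn.ne'
    have hntop : (n : ℝ≥0∞) ≠ ∞ := ENNReal.natCast_ne_top n
    obtain ⟨A₁, hA₁m, hA₁sub, hPA₁⟩ := my_sierpinski P hat hBk (show p / (n:ℝ≥0∞) ≤ p by
      calc p / (n:ℝ≥0∞) = p * ((n:ℝ≥0∞))⁻¹ := div_eq_mul_inv p ((n:ℝ≥0∞))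
      _ ≤ p * 1 := by gcongr; exact ENNReal.inv_le_one.2 (by exact_mod_cast hn)
      _ = p := mul_one p)
    have hnp : (n : ℝ≥0∞) * (p / n) = p := by
      rw [mul_comm, ENNReal.div_mul_cancel hn0 hntop]
    have h1 : m Bk = (n : ℝ) • m A₁ :=
      C3 n (p / n) (le_of_eq hnp) A₁ Bk hA₁m hBk hA₁sub subset_rfl hPA₁ (by rw [hnp])
    have hmA₁ : m A₁ = (n : ℝ)⁻¹ • m Bk := by
      rw [h1, smul_smul, inv_mul_cancel₀ (by exact_mod_cast hn.ne'), one_smul]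
    have h2 : m A = (j : ℝ) • m A₁ := by
      refine C3 j (p / n) ?_ A₁ A hA₁m hAm hA₁sub hABk hPA₁ hPA
      calc (j : ℝ≥0∞) * (p / n) ≤ (n : ℝ≥0∞) * (p / n) :=
            mul_le_mul_left (by exact_mod_cast hjn) _
      _ = p := hnp
    rw [h2, hmA₁, smul_smul, div_eq_mul_inv]
  -- the limiting argument
  set pt : ℝ := p.toReal with hpt
  have hpt0 : 0 < pt := ENNReal.toReal_pos hBkpos.ne' hptop
  set c : ℝ := (P A).toReal / pt with hc
  have hPAle : P A ≤ p := measure_mono hABk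
  have hc0 : 0 ≤ c := div_nonneg ENNReal.toReal_nonneg hpt0.le
  have hc1 : c ≤ 1 := by
    rw [hc, div_le_one hpt0]
    exact ENNReal.toReal_mono hptop hPAle
  have key : ∀ n : ℕ, 0 < n →
      ‖m A - c • m Bk‖ ≤ K * Real.sqrt (pt / n) + ‖m Bk‖ / n := by
    intro n hn
    have hnR : (0:ℝ) < n := by exact_mod_cast hn
    set j : ℕ := ⌊c * n⌋₊ with hj
    have hjn : j ≤ n := by
      have : c * n ≤ (n : ℝ) := by nlinarith
      calc j ≤ ⌊(n : ℝ)⌋₊ := Nat.floor_mono this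
      _ = n := Nat.floor_natCast n
    have hjc : (j : ℝ) ≤ c * n := Nat.floor_le (by positivity)
    have hcj : c * n < j + 1 := Nat.lt_floor_add_one _
    set r : ℝ≥0∞ := (j : ℝ≥0∞) * (p / n) with hr
    have hrfin : r ≠ ∞ := ENNReal.mul_ne_top (ENNReal.natCast_ne_top j)
      (ENNReal.div_lt_top hptop (by exact_mod_cast hn.ne')).ne
    have hrtoReal : r.toReal = (j : ℝ) * (pt / n) := by
      rw [hr, ENNReal.toReal_mul, ENNReal.toReal_div]
      simp [hpt]
    have hrle : r ≤ P A := by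
      rw [← ENNReal.ofReal_toReal hrfin, ← ENNReal.ofReal_toReal (measure_ne_top P A)]
      apply ENNReal.ofReal_le_ofReal
      rw [hrtoReal]
      have : (P A).toReal = c * pt := by
        rw [hc]; field_simp
      rw [this]
      calc (j : ℝ) * (pt / n) ≤ (c * n) * (pt / n) := by
            apply mul_le_mul_of_nonneg_right hjc (by positivity)
      _ = c * pt := by field_simp
    obtain ⟨A', hA'm, hA'sub, hPA'⟩ := my_sierpinski P hat hA hrle
    have hsplit := hdiff A A' hA hA'm hA'sub
    have hmA' : m A' = ((j : ℝ) / n) • m Bk :=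
      C4 n j hn hjn A' hA'm (hA'sub.trans hABk) hPA'
    have hPAdiff : (P (A \ A')).toReal ≤ pt / n := by
      rw [measure_diff hA'sub hA'm.nullMeasurableSet (measure_ne_top P A'), hPA']
      rw [ENNReal.toReal_sub_of_le hrle (measure_ne_top P A), hrtoReal]
      have hPA : (P A).toReal = c * pt := by rw [hc]; field_simp
      rw [hPA]
      have : c * pt ≤ (j + 1) * (pt / n) := by
        calc c * pt = (c * n) * (pt / n) := by field_simp
        _ ≤ (j + 1) * (pt / n) := by
              apply mul_le_mul_of_nonneg_right hcj.le (by positivity)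
      nlinarith [this]
    have hbound : ‖m (A \ A')‖ ≤ K * Real.sqrt (pt / n) := by
      refine (hnorm _ (hA.diff hA'm)).trans ?_
      have hK : 0 ≤ K := by
        have h1 := (norm_nonneg (m Bk)).trans (hnorm Bk hBk)
        have hs : (0:ℝ) < Real.sqrt (P Bk).toReal := Real.sqrt_pos.2 hpt0
        nlinarith
      have hs := Real.sqrt_le_sqrt hPAdiff
      have hK2 : 0 ≤ K := hK
      nlinarith [Real.sqrt_nonneg (P (A \ A')).toReal]
    have hcmj : |c - (j : ℝ) / n| ≤ 1 / n := by
      rw [abs_le]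
      constructor
      · have h4 : (j : ℝ) / n ≤ c := by
          rw [div_le_iff₀ hnR]; exact hjc
        have h5 : (0:ℝ) < 1 / n := by positivity
        linarith
      · have : c - (j : ℝ) / n < 1 / n := by
          rw [sub_lt_iff_lt_add, ← add_div, lt_div_iff₀ hnR]
          linarith
        linarith
    calc ‖m A - c • m Bk‖ = ‖m (A \ A') + (((j:ℝ)/n) - c) • m Bk‖ := by
          rw [hsplit, hmA']
          congr 1
          module
    _ ≤ ‖m (A \ A')‖ + ‖(((j:ℝ)/n) - c) • m Bk‖ := norm_add_le _ _
    _ ≤ K * Real.sqrt (pt / n) + ‖m Bk‖ / n := by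
          rw [norm_smul]
          refine add_le_add hbound ?_
          rw [Real.norm_eq_abs, abs_sub_comm]
          calc |c - (j:ℝ)/n| * ‖m Bk‖ ≤ (1/n) * ‖m Bk‖ := by
                apply mul_le_mul_of_nonneg_right hcmj (norm_nonneg _)
          _ = ‖m Bk‖ / n := by ring
  -- take the limit
  have htend : Filter.Tendsto (fun n : ℕ => K * Real.sqrt (pt / n) + ‖m Bk‖ / n)
      Filter.atTop (nhds 0) := by
    have h1 : Filter.Tendsto (fun n : ℕ => pt / n) Filter.atTop (nhds 0) :=
      tendsto_const_div_atTop_nhds_zero_nat pt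
    have h2 : Filter.Tendsto (fun n : ℕ => Real.sqrt (pt / n)) Filter.atTop (nhds 0) := by
      have h := (Real.continuous_sqrt.tendsto 0).comp h1
      rw [Real.sqrt_zero] at h
      exact h
    have h3 : Filter.Tendsto (fun n : ℕ => ‖m Bk‖ / n) Filter.atTop (nhds 0) :=
      tendsto_const_div_atTop_nhds_zero_nat _
    have := (h2.const_mul K).add h3
    simpa using this
  have hle : ‖m A - c • m Bk‖ ≤ 0 := by
    refine ge_of_tendsto htend ?_
    filter_upwards [Filter.eventually_gt_atTop 0] with n hn
    exact key n hn
  have : m A - c • m Bk = 0 := by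
    rw [← norm_le_zero_iff]
    exact hle
  rw [hc, hpt] at this
  have := sub_eq_zero.1 this
  rw [this]



end Aux

/-- Radon–Nikodym derivative of the measure `m_{μ₀}` with respect to `μ₀` in the discrete
case: for `X₀` taking finitely many values `x₁,…,x_N` with positive probability, the step
map `g(x) = ∑ₖ (m_{μ₀}({xₖ})/μ₀({xₖ})) 1_{{xₖ}}(x)` satisfies
`E[1_A · g(X₀)] = m_{Df̂(X₀)}(A)` for all measurable `A` (tested against every `u ∈ H`). -/
theorem stmt13 {Ω H U : Type*}
    [MeasurableSpace Ω] [TopologicalSpace Ω] [PolishSpace Ω] [BorelSpace Ω]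
    (P : Measure Ω) [IsProbabilityMeasure P]
    (hatomless : ∀ A : Set Ω, MeasurableSet A → 0 < P A →
      ∃ B : Set Ω, MeasurableSet B ∧ B ⊆ A ∧ 0 < P B ∧ P B < P A)
    [NormedAddCommGroup H] [InnerProductSpace ℝ H] [CompleteSpace H]
    [SecondCountableTopology H] [MeasurableSpace H] [BorelSpace H]
    [NormedAddCommGroup U] [InnerProductSpace ℝ U] [CompleteSpace U]
    (fhat : Lp H 2 P → U)
    (hlaw : ∀ X X' : Lp H 2 P, P.map ⇑X = P.map ⇑X' → fhat X = fhat X')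
    (Df : Lp H 2 P → (Lp H 2 P →L[ℝ] U))
    (hderiv : ∀ X : Lp H 2 P, HasFDerivAt fhat (Df X) X)
    (hΛfin : ∀ X : Lp H 2 P, opSemiVar P 2 (Df X) < ∞)
    (hΛcont : ∀ (X : Lp H 2 P) (ε : ℝ≥0∞), 0 < ε → ∃ δ > (0 : ℝ), ∀ X' : Lp H 2 P,
      ‖X' - X‖ < δ → opSemiVar P 2 (Df X' - Df X) < ε)
    (X0 : Ω → H) (hX0meas : Measurable X0) (hX0 : MemLp X0 2 P)
    (N : ℕ) (x : Fin N → H) (hinj : Function.Injective x)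
    (hvals : ∀ ω, ∃ k, X0 ω = x k)
    (hpos : ∀ k, 0 < P (X0 ⁻¹' {x k})) :
    ∀ (A : Set Ω) (hA : MeasurableSet A) (u : H),
      (∫ ω in A,
          (∑ k, Set.indicator ({x k} : Set H)
            (fun _ => (P (X0 ⁻¹' {x k})).toReal⁻¹ •
              Df (MemLp.toLp X0 hX0)
                (indicatorConstLp 2 (hX0meas (isClosed_singleton.measurableSet))
                  (measure_ne_top P (X0 ⁻¹' {x k})) u)) (X0 ω)) ∂P) =
        Df (MemLp.toLp X0 hX0) (indicatorConstLp 2 hA (measure_ne_top P A) u) := by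
  classical
  intro A hA u
  set X : Lp H 2 P := MemLp.toLp X0 hX0 with hXdef
  set B : Fin N → Set Ω := fun k => X0 ⁻¹' {x k} with hBdef
  have hBm : ∀ k, MeasurableSet (B k) := fun k => hX0meas (measurableSet_singleton (x k))
  have hBdisj : ∀ j k, j ≠ k → Disjoint (B j) (B k) := by
    intro j k hjk
    refine Set.disjoint_left.2 fun ω h1 h2 => hjk (hinj ?_)
    have e1 : X0 ω = x j := h1
    have e2 : X0 ω = x k := h2
    rw [← e1, ← e2]
  -- the vector measure
  set m : Set Ω → U := fun S =>
    if hS : MeasurableSet S then Df X (indicatorConstLp 2 hS (measure_ne_top P S) u) else 0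
    with hmdef
  have hm : ∀ (S : Set Ω) (hS : MeasurableSet S),
      m S = Df X (indicatorConstLp 2 hS (measure_ne_top P S) u) := fun S hS => dif_pos hS
  set K : ℝ := ‖Df X‖ * ‖u‖ with hKdef
  have hnorm : ∀ S : Set Ω, MeasurableSet S → ‖m S‖ ≤ K * Real.sqrt (P S).toReal := by
    intro S hS
    rw [hm S hS]
    calc ‖Df X (indicatorConstLp 2 hS (measure_ne_top P S) u)‖
        ≤ ‖Df X‖ * ‖indicatorConstLp 2 hS (measure_ne_top P S) u‖ := (Df X).le_opNorm _
    _ = K * Real.sqrt (P S).toReal := by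
        rw [norm_indicatorConstLp (by norm_num) (by norm_num)]
        rw [Real.sqrt_eq_rpow]
        norm_num [hKdef, mul_assoc, measureReal_def]
  have hadd : ∀ S S' : Set Ω, MeasurableSet S → MeasurableSet S' → Disjoint S S' →
      m (S ∪ S') = m S + m S' := by
    intro S S' hS hS' hdisj
    rw [hm S hS, hm S' hS', hm (S ∪ S') (hS.union hS'), ← map_add,
      ← indicatorConstLp_disjoint_union hS hS' (measure_ne_top P S) (measure_ne_top P S') hdisj u]
  -- law invariance of the vector measure
  have hinv : ∀ S S' : Set Ω, MeasurableSet S → MeasurableSet S' →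
      (∀ k, P (S ∩ B k) = P (S' ∩ B k)) → m S = m S' := by
    intro S S' hS hS' hSS'
    rw [hm S hS, hm S' hS']
    set ZS := indicatorConstLp 2 hS (measure_ne_top P S) u with hZS
    set ZS' := indicatorConstLp 2 hS' (measure_ne_top P S') u with hZS'
    have hrep : ∀ (T : Set Ω) (hT : MeasurableSet T) (t : ℝ),
        ⇑(X + t • (indicatorConstLp 2 hT (measure_ne_top P T) u)) =ᵐ[P]
          fun ω => X0 ω + T.indicator (fun _ => t • u) ω := by
      intro T hT t
      filter_upwards [Lp.coeFn_add X (t • indicatorConstLp 2 hT (measure_ne_top P T) u),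
        Lp.coeFn_smul t (indicatorConstLp 2 hT (measure_ne_top P T) u),
        indicatorConstLp_coeFn (p := 2) (hs := hT) (hμs := measure_ne_top P T) (c := u),
        hX0.coeFn_toLp] with ω h1 h2 h3 h4
      rw [h1, Pi.add_apply, h2, Pi.smul_apply, h3, h4]
      by_cases hω : ω ∈ T <;> simp [hω]
    have hmeasg : ∀ (T : Set Ω), MeasurableSet T → ∀ t : ℝ,
        Measurable (fun ω => X0 ω + T.indicator (fun _ => t • u) ω) :=
      fun T hT t => hX0meas.add ((measurable_const (a := t • u)).indicator hT)
    have hpart : ∀ T : Set Ω, MeasurableSet T → P T = ∑ k, P (T ∩ B k) := by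
      intro T hT
      have hcover : T = ⋃ k, T ∩ B k := by
        ext ω
        simp only [Set.mem_iUnion, Set.mem_inter_iff]
        constructor
        · intro hω
          obtain ⟨k, hk⟩ := hvals ω
          exact ⟨k, hω, hk⟩
        · rintro ⟨k, hω, _⟩; exact hω
      have hdisj2 : Pairwise (Function.onFun Disjoint fun k => T ∩ B k) := by
        intro j k hjk
        exact ((hBdisj j k hjk).mono Set.inter_subset_right Set.inter_subset_right)
      conv_lhs => rw [hcover]
      rw [measure_iUnion hdisj2 fun k => hT.inter (hBm k), tsum_fintype]
    have hpiece : ∀ (T : Set Ω), MeasurableSet T → ∀ (t : ℝ) (V : Set H), ∀ k,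
        P ((fun ω => X0 ω + T.indicator (fun _ => t • u) ω) ⁻¹' V ∩ B k)
          = (if x k + t • u ∈ V then P (T ∩ B k) else 0)
            + (if x k ∈ V then P (B k) - P (T ∩ B k) else 0) := by
      intro T hT t V k
      set g : Ω → H := fun ω => X0 ω + T.indicator (fun _ => t • u) ω with hg
      have hval1 : ∀ ω ∈ T ∩ B k, g ω = x k + t • u := by
        rintro ω ⟨hωT, hωB⟩
        have : X0 ω = x k := hωB
        simp [hg, Set.indicator_of_mem hωT, this]
      have hval2 : ∀ ω ∈ B k \ T, g ω = x k := by
        rintro ω ⟨hωB, hωT⟩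
        have : X0 ω = x k := hωB
        simp [hg, Set.indicator_of_notMem hωT, this]
      have hsplitB : g ⁻¹' V ∩ B k = (g ⁻¹' V ∩ (T ∩ B k)) ∪ (g ⁻¹' V ∩ (B k \ T)) := by
        rw [← Set.inter_union_distrib_left]
        congr 1
        ext ω
        by_cases hωT : ω ∈ T <;> simp [hωT]
      have h1 : g ⁻¹' V ∩ (T ∩ B k) = if x k + t • u ∈ V then T ∩ B k else ∅ := by
        split_ifs with hV
        · refine Set.inter_eq_self_of_subset_right fun ω hω => ?_
          simpa [Set.mem_preimage, hval1 ω hω] using hV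
        · refine Set.eq_empty_iff_forall_notMem.2 fun ω hω => ?_
          exact hV (by simpa [Set.mem_preimage, hval1 ω hω.2] using hω.1)
      have h2 : g ⁻¹' V ∩ (B k \ T) = if x k ∈ V then B k \ T else ∅ := by
        split_ifs with hV
        · refine Set.inter_eq_self_of_subset_right fun ω hω => ?_
          simpa [Set.mem_preimage, hval2 ω hω] using hV
        · refine Set.eq_empty_iff_forall_notMem.2 fun ω hω => ?_
          exact hV (by simpa [Set.mem_preimage, hval2 ω hω.2] using hω.1)
      have hd : Disjoint (g ⁻¹' V ∩ (T ∩ B k)) (g ⁻¹' V ∩ (B k \ T)) := by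
        refine Set.disjoint_left.2 fun ω hω1 hω2 => hω2.2.2 hω1.2.1
      have hmeas2 : MeasurableSet (g ⁻¹' V ∩ (B k \ T)) := by
        rw [h2]
        split_ifs
        · exact (hBm k).diff hT
        · exact MeasurableSet.empty
      rw [hsplitB, measure_union hd hmeas2, h1, h2]
      congr 1
      · rw [apply_ite P, measure_empty]
      · rw [apply_ite P, measure_empty]
        congr 1
        rw [← Set.diff_inter_self_eq_diff,
          measure_diff Set.inter_subset_right (hT.inter (hBm k)).nullMeasurableSet
            (measure_ne_top P _)]
    have hmapeq : ∀ t : ℝ, P.map ⇑(X + t • ZS) = P.map ⇑(X + t • ZS') := by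
      intro t
      rw [Measure.map_congr (hrep S hS t), Measure.map_congr (hrep S' hS' t)]
      refine Measure.ext fun V hV => ?_
      rw [Measure.map_apply (hmeasg S hS t) hV, Measure.map_apply (hmeasg S' hS' t) hV,
        hpart _ ((hmeasg S hS t) hV), hpart _ ((hmeasg S' hS' t) hV)]
      refine Finset.sum_congr rfl fun k _ => ?_
      rw [hpiece S hS t V k, hpiece S' hS' t V k, hSS' k]
    have hfeq : ∀ t : ℝ, fhat (X + t • ZS) = fhat (X + t • ZS') := fun t => hlaw _ _ (hmapeq t)
    have hder : ∀ Z : Lp H 2 P, HasDerivAt (fun t : ℝ => fhat (X + t • Z)) (Df X Z) 0 := by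
      intro Z
      have hline : HasDerivAt (fun t : ℝ => X + t • Z) Z 0 := by
        simpa using ((hasDerivAt_id (0 : ℝ)).smul_const Z).const_add X
      have hf : HasFDerivAt fhat (Df X) ((fun t : ℝ => X + t • Z) 0) := by
        simpa using hderiv X
      exact hf.comp_hasDerivAt 0 hline
    have hfun : (fun t : ℝ => fhat (X + t • ZS)) = fun t : ℝ => fhat (X + t • ZS') :=
      funext hfeq
    exact (hfun ▸ hder ZS).unique (hder ZS')
  -- scaling on each atom
  have hscale : ∀ k, ∀ S : Set Ω, MeasurableSet S → S ⊆ B k →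
      m S = ((P S).toReal / (P (B k)).toReal) • m (B k) := by
    intro k S hS hsub
    refine my_scale P hatomless m K hnorm hadd (hBm k) (hpos k) ?_ hS hsub
    intro S S' hSm hS'm hSsub hS'sub hPP
    refine hinv S S' hSm hS'm fun j => ?_
    by_cases hj : j = k
    · subst hj
      rw [Set.inter_eq_self_of_subset_left hSsub, Set.inter_eq_self_of_subset_left hS'sub, hPP]
    · have hkj : k ≠ j := fun h => hj h.symm
      rw [Set.disjoint_iff_inter_eq_empty.1 ((hBdisj k j hkj).mono_left hSsub),
        Set.disjoint_iff_inter_eq_empty.1 ((hBdisj k j hkj).mono_left hS'sub)]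
  -- final computation
  have hm0 : m ∅ = 0 := by
    have h := hnorm ∅ MeasurableSet.empty
    simp only [measure_empty, ENNReal.toReal_zero, Real.sqrt_zero, mul_zero] at h
    exact norm_le_zero_iff.1 h
  have hmk : ∀ k, Df X (indicatorConstLp 2 (hX0meas (isClosed_singleton.measurableSet))
      (measure_ne_top P (X0 ⁻¹' {x k})) u) = m (B k) := fun k => (hm (B k) (hBm k)).symm
  have hgoal_int : ∀ ω : Ω, (∑ k, Set.indicator ({x k} : Set H)
      (fun _ => (P (X0 ⁻¹' {x k})).toReal⁻¹ •
        Df X (indicatorConstLp 2 (hX0meas (isClosed_singleton.measurableSet))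
          (measure_ne_top P (X0 ⁻¹' {x k})) u)) (X0 ω)) =
      ∑ k, (B k).indicator (fun _ => (P (B k)).toReal⁻¹ • m (B k)) ω := by
    intro ω
    refine Finset.sum_congr rfl fun k _ => ?_
    rw [hmk k]
    by_cases hω : X0 ω ∈ ({x k} : Set H)
    · rw [Set.indicator_of_mem hω, Set.indicator_of_mem (show ω ∈ B k from hω)]
    · rw [Set.indicator_of_notMem hω, Set.indicator_of_notMem (show ω ∉ B k from hω)]
  simp only [hgoal_int]
  rw [integral_finset_sum _ (fun k _ =>
    ((integrable_const ((P (B k)).toReal⁻¹ • m (B k))).indicator (hBm k)).integrableOn)]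
  have hterm : ∀ k, (∫ ω in A, (B k).indicator
      (fun _ => (P (B k)).toReal⁻¹ • m (B k)) ω ∂P) =
      (P (A ∩ B k)).toReal • ((P (B k)).toReal⁻¹ • m (B k)) := by
    intro k
    rw [setIntegral_indicator (hBm k), setIntegral_const, measureReal_def]
  simp only [hterm]
  -- decompose the right-hand side
  rw [← hm A hA]
  have hAdd : ∀ s : Finset (Fin N), m (⋃ k ∈ s, A ∩ B k) = ∑ k ∈ s, m (A ∩ B k) := by
    intro s
    induction s using Finset.induction with
    | empty => simpa using hm0
    | @insert a s ha ih =>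
      rw [Finset.set_biUnion_insert, Finset.sum_insert ha, ← ih]
      refine hadd _ _ (hA.inter (hBm a)) (s.measurableSet_biUnion
        (fun k _ => hA.inter (hBm k))) ?_
      refine Set.disjoint_left.2 fun ω hω1 hω2 => ?_
      simp only [Set.mem_iUnion, Set.mem_inter_iff] at hω2
      obtain ⟨k, hk, _, hωBk⟩ := hω2
      have hak : a ≠ k := fun h => ha (h ▸ hk)
      exact Set.disjoint_left.1 (hBdisj a k hak) hω1.2 hωBk
  have hAcover : A = ⋃ k ∈ Finset.univ, A ∩ B k := by
    ext ω
    simp only [Finset.mem_univ, Set.iUnion_true, Set.mem_iUnion, Set.mem_inter_iff]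
    constructor
    · intro hω
      obtain ⟨k, hk⟩ := hvals ω
      exact ⟨k, hω, hk⟩
    · rintro ⟨k, hω, _⟩; exact hω
  conv_rhs => rw [hAcover]
  rw [hAdd Finset.univ]
  refine Finset.sum_congr rfl fun k _ => ?_
  rw [hscale k (A ∩ B k) (hA.inter (hBm k)) Set.inter_subset_right, smul_smul, div_eq_mul_inv]
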